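/- Let μ be a probability measure on ℝ² with continuous marginal cumulative distribution functions F_X and F_Y, joint cumulative distribution function F, support S, and d_τ(x,y) := F(x,y) − (F_X(x)+F_Y(y))/2. If the two-dimensional Lebesgue measure of S is positive, λ₂(S) > 0, then d_τ is not constant on S. -/

import Mathlib

open MeasureTheory Set
open scoped ENNReal

lemma diag_null : volume {p : ℝ × ℝ | p.1 = p.2} = 0 := by
  have hm : MeasurableSet {p : ℝ × ℝ | p.1 = p.2} :=
    (isClosed_eq continuous_fst continuous_snd).measurableSet
  rw [Measure.volume_eq_prod, Measure.prod_apply hm]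
  have : ∀ x : ℝ, (volume (Prod.mk x ⁻¹' {p : ℝ × ℝ | p.1 = p.2})) = 0 := by
    intro x
    have : Prod.mk x ⁻¹' {p : ℝ × ℝ | p.1 = p.2} = {x} := by
      ext y; simp [eq_comm]
    rw [this]; simp
  simp [this]

lemma D12_null : volume {p : ℝ × ℝ × ℝ | p.1 = p.2.1} = 0 := by
  have hm : MeasurableSet {p : ℝ × ℝ × ℝ | p.1 = p.2.1} :=
    (isClosed_eq continuous_fst (continuous_fst.comp continuous_snd)).measurableSet
  rw [Measure.volume_eq_prod, Measure.prod_apply hm]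
  have : ∀ x : ℝ, (volume (Prod.mk x ⁻¹' {p : ℝ × ℝ × ℝ | p.1 = p.2.1})) = 0 := by
    intro x
    have : Prod.mk x ⁻¹' {p : ℝ × ℝ × ℝ | p.1 = p.2.1} = ({x} : Set ℝ) ×ˢ (univ : Set ℝ) := by
      ext ⟨u,v⟩
      simp only [mem_setOf_eq, mem_preimage, Set.mem_prod, mem_singleton_iff, mem_univ, and_true]
      exact eq_comm
    rw [this, Measure.volume_eq_prod, Measure.prod_prod]
    simp
  rw [lintegral_congr this, lintegral_zero]

lemma D13_null : volume {p : ℝ × ℝ × ℝ | p.1 = p.2.2} = 0 := by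
  have hm : MeasurableSet {p : ℝ × ℝ × ℝ | p.1 = p.2.2} :=
    (isClosed_eq continuous_fst (continuous_snd.comp continuous_snd)).measurableSet
  rw [Measure.volume_eq_prod, Measure.prod_apply hm]
  have : ∀ x : ℝ, (volume (Prod.mk x ⁻¹' {p : ℝ × ℝ × ℝ | p.1 = p.2.2})) = 0 := by
    intro x
    have : Prod.mk x ⁻¹' {p : ℝ × ℝ × ℝ | p.1 = p.2.2} = (univ : Set ℝ) ×ˢ ({x} : Set ℝ) := by
      ext ⟨u,v⟩
      simp only [mem_setOf_eq, mem_preimage, Set.mem_prod, mem_singleton_iff, mem_univ, true_and]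
      exact eq_comm
    rw [this, Measure.volume_eq_prod, Measure.prod_prod]
    simp
  rw [lintegral_congr this, lintegral_zero]

lemma D23_null : volume {p : ℝ × ℝ × ℝ | p.2.1 = p.2.2} = 0 := by
  have hm : MeasurableSet {p : ℝ × ℝ × ℝ | p.2.1 = p.2.2} :=
    (isClosed_eq (continuous_fst.comp continuous_snd)
      (continuous_snd.comp continuous_snd)).measurableSet
  rw [Measure.volume_eq_prod, Measure.prod_apply hm]
  have : ∀ x : ℝ, (volume (Prod.mk x ⁻¹' {p : ℝ × ℝ × ℝ | p.2.1 = p.2.2})) = 0 := by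
    intro x
    have : Prod.mk x ⁻¹' {p : ℝ × ℝ × ℝ | p.2.1 = p.2.2} = {q : ℝ × ℝ | q.1 = q.2} := by
      ext q; simp
    rw [this, diag_null]
  rw [lintegral_congr this, lintegral_zero]

lemma sort3 {a b c : ℝ} (h1 : a ≠ b) (h2 : a ≠ c) (h3 : b ≠ c) :
    ∃ p q r : ℝ, p < q ∧ q < r ∧ p ∈ ({a, b, c} : Set ℝ) ∧ q ∈ ({a, b, c} : Set ℝ) ∧
      r ∈ ({a, b, c} : Set ℝ) := by
  rcases lt_trichotomy a b with hab | hab | hab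
  · rcases lt_trichotomy b c with hbc | hbc | hbc
    · exact ⟨a, b, c, hab, hbc, by simp, by simp, by simp⟩
    · exact absurd hbc h3
    · rcases lt_trichotomy a c with hac | hac | hac
      · exact ⟨a, c, b, hac, hbc, by simp, by simp, by simp⟩
      · exact absurd hac h2
      · exact ⟨c, a, b, hac, hab, by simp, by simp, by simp⟩
  · exact absurd hab h1
  · rcases lt_trichotomy a c with hac | hac | hac
    · exact ⟨b, a, c, hab, hac, by simp, by simp, by simp⟩
    · exact absurd hac h2
    · rcases lt_trichotomy b c with hbc | hbc | hbc
      · exact ⟨b, c, a, hbc, hac, by simp, by simp, by simp⟩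
      · exact absurd hbc h3
      · exact ⟨c, b, a, hbc, hab, by simp, by simp, by simp⟩

lemma exists_grid (S : Set (ℝ × ℝ)) (hm : MeasurableSet S) (hvol : 0 < volume S) :
    ∃ xa xb xc ya yb yc : ℝ, xa < xb ∧ xb < xc ∧ ya < yb ∧ yb < yc ∧
      (xa, ya) ∈ S ∧ (xa, yc) ∈ S ∧ (xc, ya) ∈ S ∧ (xc, yc) ∈ S ∧ (xb, yb) ∈ S := by
  classical
  set f : ℝ → ℝ≥0∞ := fun y => volume ((fun x => (x, y)) ⁻¹' S) with hfdef
  have hfm : Measurable f := measurable_measure_prodMk_right hm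
  have hvolS : volume S = ∫⁻ y, f y := by
    rw [Measure.volume_eq_prod, Measure.prod_apply_symm hm]
  have hsupp : 0 < volume (Function.support f) := by
    rw [← lintegral_pos_iff_support hfm, ← hvolS]; exact hvol
  set A : Set ((ℝ × ℝ × ℝ) × ℝ) :=
    {p | (p.1.1, p.2) ∈ S ∧ (p.1.2.1, p.2) ∈ S ∧ (p.1.2.2, p.2) ∈ S} with hAdef
  have hAm : MeasurableSet A := by
    have m1 : Measurable fun p : (ℝ × ℝ × ℝ) × ℝ => (p.1.1, p.2) :=
      (measurable_fst.fst).prodMk measurable_snd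
    have m2 : Measurable fun p : (ℝ × ℝ × ℝ) × ℝ => (p.1.2.1, p.2) :=
      (measurable_fst.snd.fst).prodMk measurable_snd
    have m3 : Measurable fun p : (ℝ × ℝ × ℝ) × ℝ => (p.1.2.2, p.2) :=
      (measurable_fst.snd.snd).prodMk measurable_snd
    exact (hm.preimage m1).inter ((hm.preimage m2).inter (hm.preimage m3))
  have hA1 : volume A = ∫⁻ y, f y * (f y * f y) := by
    rw [Measure.volume_eq_prod, Measure.prod_apply_symm hAm]
    refine lintegral_congr fun y => ?_
    have hsec : ((fun x : ℝ × ℝ × ℝ => (x, y)) ⁻¹' A) =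
        ((fun x => (x, y)) ⁻¹' S) ×ˢ (((fun x => (x, y)) ⁻¹' S) ×ˢ ((fun x => (x, y)) ⁻¹' S)) := by
      ext ⟨u, v, w⟩
      simp only [hAdef, mem_preimage, mem_setOf_eq, Set.mem_prod]
    rw [hsec, Measure.volume_eq_prod, Measure.prod_prod, Measure.volume_eq_prod,
      Measure.prod_prod]
  have hApos : 0 < volume A := by
    rw [hA1, lintegral_pos_iff_support (f := fun y => f y * (f y * f y)) (hfm.mul (hfm.mul hfm))]
    have hss : Function.support (fun y => f y * (f y * f y)) = Function.support f := by
      ext y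
      simp only [Function.mem_support, ne_eq, mul_eq_zero]
      tauto
    rw [hss]; exact hsupp
  set g : (ℝ × ℝ × ℝ) → ℝ≥0∞ := fun x => volume (Prod.mk x ⁻¹' A) with hgdef
  have hgm : Measurable g := measurable_measure_prodMk_left hAm
  have hA2 : volume A = ∫⁻ x, g x := by
    rw [Measure.volume_eq_prod, Measure.prod_apply hAm]
  have hgsupp : 0 < volume (Function.support g) := by
    rw [← lintegral_pos_iff_support hgm, ← hA2]; exact hApos
  have hD : volume ({p : ℝ × ℝ × ℝ | p.1 = p.2.1} ∪ {p : ℝ × ℝ × ℝ | p.1 = p.2.2}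
      ∪ {p : ℝ × ℝ × ℝ | p.2.1 = p.2.2}) = 0 :=
    measure_union_null (measure_union_null D12_null D13_null) D23_null
  have hpos : 0 < volume (Function.support g \ ({p : ℝ × ℝ × ℝ | p.1 = p.2.1}
      ∪ {p : ℝ × ℝ × ℝ | p.1 = p.2.2} ∪ {p : ℝ × ℝ × ℝ | p.2.1 = p.2.2})) := by
    rwa [measure_diff_null hD]
  obtain ⟨⟨x1, x2, x3⟩, hx⟩ := nonempty_of_measure_ne_zero hpos.ne'
  have hgx : g (x1, x2, x3) ≠ 0 := hx.1
  have hxd : x1 ≠ x2 ∧ x1 ≠ x3 ∧ x2 ≠ x3 := by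
    have := hx.2
    simp only [mem_union, mem_setOf_eq, not_or] at this
    exact ⟨this.1.1, this.1.2, this.2⟩
  set T : Set ℝ := Prod.mk (x1, x2, x3) ⁻¹' A with hTdef
  have hTinf : T.Infinite := by
    by_contra hfin
    rw [Set.not_infinite] at hfin
    exact hgx (hfin.countable.measure_zero volume)
  obtain ⟨t1, ht1⟩ := hTinf.nonempty
  obtain ⟨t2, ht2⟩ := (hTinf.diff (Set.finite_singleton t1)).nonempty
  obtain ⟨t3, ht3⟩ := (hTinf.diff (Set.Finite.insert t1 (Set.finite_singleton t2))).nonempty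
  have ht2T : t2 ∈ T := ht2.1
  have ht3T : t3 ∈ T := ht3.1
  have h12 : t1 ≠ t2 := fun h => ht2.2 (by simp [← h])
  have h13 : t1 ≠ t3 := fun h => ht3.2 (by simp [← h])
  have h23 : t2 ≠ t3 := fun h => ht3.2 (by simp [← h])
  obtain ⟨xa, xb, xc, hxab, hxbc, hxaM, hxbM, hxcM⟩ := sort3 hxd.1 hxd.2.1 hxd.2.2
  obtain ⟨ya, yb, yc, hyab, hybc, hyaM, hybM, hycM⟩ := sort3 h12 h13 h23
  have key : ∀ u ∈ ({x1, x2, x3} : Set ℝ), ∀ v ∈ ({t1, t2, t3} : Set ℝ), (u, v) ∈ S := by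
    intro u hu v hv
    have hvT : v ∈ T := by
      rcases hv with rfl | rfl | rfl
      exacts [ht1, ht2T, ht3T]
    have hA3 : (x1, v) ∈ S ∧ (x2, v) ∈ S ∧ (x3, v) ∈ S := hvT
    rcases hu with rfl | rfl | rfl
    exacts [hA3.1, hA3.2.1, hA3.2.2]
  exact ⟨xa, xb, xc, ya, yb, yc, hxab, hxbc, hyab, hybc,
    key xa hxaM ya hyaM, key xa hxaM yc hycM, key xc hxcM ya hyaM,
    key xc hxcM yc hycM, key xb hxbM yb hybM⟩
theorem stmt_10
    (μ : Measure (ℝ × ℝ)) [IsProbabilityMeasure μ]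
    (F : ℝ → ℝ → ℝ) (FX FY : ℝ → ℝ) (dτ : ℝ × ℝ → ℝ)
    (hF : ∀ x y, F x y = (μ (Iic x ×ˢ Iic y)).toReal)
    (hFX : ∀ x, FX x = (μ (Iic x ×ˢ (univ : Set ℝ))).toReal)
    (hFY : ∀ y, FY y = (μ ((univ : Set ℝ) ×ˢ Iic y)).toReal)
    (hFXcont : Continuous FX) (hFYcont : Continuous FY)
    (hdτ : ∀ p : ℝ × ℝ, dτ p = F p.1 p.2 - (FX p.1 + FY p.2) / 2)
    (S : Set (ℝ × ℝ))
    (hSclosed : IsClosed S) (hSfull : μ Sᶜ = 0)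
    (hSmin : ∀ T : Set (ℝ × ℝ), IsClosed T → μ Tᶜ = 0 → S ⊆ T)
    (hSvol : 0 < volume S) :
    ∃ p ∈ S, ∃ q ∈ S, dτ p ≠ dτ q := by
  by_contra hcon
  push_neg at hcon
  obtain ⟨xa, xb, xc, ya, yb, yc, hx1, hx2, hy1, hy2, hS11, hS12, hS21, hS22, hSmid⟩ :=
    exists_grid S hSclosed.measurableSet hSvol
  have e1 := hcon (xa, ya) hS11 (xc, ya) hS21
  have e2 := hcon (xa, yc) hS12 (xc, yc) hS22
  simp only [hdτ, hF, hFX, hFY] at e1 e2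
  have hxac : xa < xc := hx1.trans hx2
  have hyac : ya < yc := hy1.trans hy2
  set R : Set (ℝ × ℝ) := Ioc xa xc ×ˢ Ioc ya yc with hRdef
  have hbig : Iic xc ×ˢ Iic yc = R ∪ ((Iic xa ×ˢ Iic yc) ∪ (Iic xc ×ˢ Iic ya)) := by
    ext ⟨u, v⟩
    simp only [hRdef, Set.mem_prod, mem_Iic, mem_Ioc, mem_union]
    constructor
    · rintro ⟨hu, hv⟩
      rcases le_or_gt u xa with h | h
      · exact Or.inr (Or.inl ⟨h, hv⟩)
      rcases le_or_gt v ya with h' | h'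
      · exact Or.inr (Or.inr ⟨hu, h'⟩)
      · exact Or.inl ⟨⟨h, hu⟩, ⟨h', hv⟩⟩
    · rintro (⟨⟨_, hu⟩, ⟨_, hv⟩⟩ | ⟨hu, hv⟩ | ⟨hu, hv⟩)
      exacts [⟨hu, hv⟩, ⟨hu.trans hxac.le, hv⟩, ⟨hu, hv.trans hyac.le⟩]
  have hdisj : Disjoint R ((Iic xa ×ˢ Iic yc) ∪ (Iic xc ×ˢ Iic ya)) := by
    rw [Set.disjoint_left]
    rintro ⟨u, v⟩ ⟨⟨hu1, _⟩, hv1, _⟩ (⟨hu, _⟩ | ⟨_, hv⟩)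
    · exact absurd hu (not_le.mpr hu1)
    · exact absurd hv (not_le.mpr hv1)
  have hmAB : MeasurableSet ((Iic xa ×ˢ Iic yc) ∪ (Iic xc ×ˢ Iic ya)) :=
    (measurableSet_Iic.prod measurableSet_Iic).union
      (measurableSet_Iic.prod measurableSet_Iic)
  have hsum : μ (Iic xc ×ˢ Iic yc) = μ R + μ ((Iic xa ×ˢ Iic yc) ∪ (Iic xc ×ˢ Iic ya)) := by
    rw [hbig, measure_union hdisj hmAB]
  have hinter : (Iic xa ×ˢ Iic yc) ∩ (Iic xc ×ˢ Iic ya) = Iic xa ×ˢ Iic ya := by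
    rw [Set.prod_inter_prod, Iic_inter_Iic, Iic_inter_Iic, min_eq_left hxac.le,
      min_eq_right hyac.le]
  have hAB := measure_union_add_inter (μ := μ) (Iic xa ×ˢ Iic yc)
    (t := Iic xc ×ˢ Iic ya) (measurableSet_Iic.prod measurableSet_Iic)
  rw [hinter] at hAB
  have hEE : μ (Iic xc ×ˢ Iic yc) + μ (Iic xa ×ˢ Iic ya) =
      μ R + (μ (Iic xa ×ˢ Iic yc) + μ (Iic xc ×ˢ Iic ya)) := by
    rw [hsum, add_assoc, hAB]
  have hreal := congrArg ENNReal.toReal hEE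
  rw [ENNReal.toReal_add (measure_ne_top μ _) (measure_ne_top μ _),
    ENNReal.toReal_add (measure_ne_top μ _)
      (ENNReal.add_ne_top.mpr ⟨measure_ne_top μ _, measure_ne_top μ _⟩),
    ENNReal.toReal_add (measure_ne_top μ _) (measure_ne_top μ _)] at hreal
  have hr0 : (μ R).toReal = 0 := by linarith
  have hR0 : μ R = 0 := by
    rcases (ENNReal.toReal_eq_zero_iff _).mp hr0 with h | h
    · exact h
    · exact absurd h (measure_ne_top μ R)
  have hU0 : μ (Ioo xa xc ×ˢ Ioo ya yc) = 0 :=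
    measure_mono_null (Set.prod_mono Ioo_subset_Ioc_self Ioo_subset_Ioc_self) hR0
  have hUopen : IsOpen (Ioo xa xc ×ˢ Ioo ya yc) := isOpen_Ioo.prod isOpen_Ioo
  have hTc : IsClosed (S \ (Ioo xa xc ×ˢ Ioo ya yc)) := by
    rw [Set.diff_eq]
    exact hSclosed.inter hUopen.isClosed_compl
  have hTnull : μ (S \ (Ioo xa xc ×ˢ Ioo ya yc))ᶜ = 0 := by
    refine measure_mono_null ?_ (measure_union_null hSfull hU0)
    intro p hp
    simp only [Set.mem_compl_iff, Set.mem_diff, not_and, not_not, mem_union] at hp ⊢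
    by_cases hpS : p ∈ S
    · exact Or.inr (hp hpS)
    · exact Or.inl hpS
  have hsub := hSmin _ hTc hTnull
  have hmem : (xb, yb) ∈ S \ (Ioo xa xc ×ˢ Ioo ya yc) := hsub hSmid
  exact hmem.2 ⟨⟨hx1, hx2⟩, ⟨hy1, hy2⟩⟩
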